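/- Under the max-propagation dynamics of the previous statement, for any target vertex t at distance r from s, after exactly r iterations h^r_t = (1, ℓ); hence the Ring Transfer task with radius r is solved exactly by an MPNN whose node feature dimension is 2, independent of r. -/

import Mathlib

lemma exists_pred_vertex {V : Type*} (G : SimpleGraph V) {s v : V} {k : ℕ}
    (p : G.Walk v s) (hlen : p.length = k + 1) :
    ∃ u, G.Adj v u ∧ G.dist s u ≤ k := by
  cases p with
  | nil => simp at hlen
  | cons hadj q =>
    rename_i u
    refine ⟨u, hadj, ?_⟩
    have h1 : G.dist u s ≤ q.length := SimpleGraph.dist_le q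
    rw [SimpleGraph.dist_comm]
    simp [SimpleGraph.Walk.length_cons] at hlen
    omega

/-- Under the max-propagation dynamics, a target vertex `t` at distance `r` from the
source `s` attains the feature `(1, ℓ)` after exactly `r` iterations: the Ring
Transfer task with radius `r` is solved exactly by an MPNN with node feature
dimension `2`, independent of `r`. -/
theorem max_propagation_transfer {V : Type*} [Fintype V] [DecidableEq V]
    (G : SimpleGraph V) [DecidableRel G.Adj] (hconn : G.Connected)
    (s t : V) (r : ℕ) (hdist : G.dist s t = r)
    (ℓ : ℝ) (hℓ : 1 ≤ ℓ) (h : ℕ → V → ℝ × ℝ)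
    (h0 : ∀ v, h 0 v = (if v = s then 1 else 0, if v = s then ℓ else 0))
    (hstep1 : ∀ k v, (h (k + 1) v).1 =
      (insert v (G.neighborFinset v)).sup' (Finset.insert_nonempty v _)
        (fun u => (h k u).1))
    (hstep2 : ∀ k v, (h (k + 1) v).2 =
      (insert v (G.neighborFinset v)).sup' (Finset.insert_nonempty v _)
        (fun u => (h k u).1 * (h k u).2)) :
    h r t = (1, ℓ) := by
  have hℓ0 : (0:ℝ) ≤ ℓ := le_trans zero_le_one hℓ
  have key : ∀ k v, h k v = (if G.dist s v ≤ k then ((1:ℝ), ℓ) else (0, 0)) := by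
    intro k
    induction k with
    | zero =>
      intro v
      rw [h0 v]
      by_cases hv : v = s
      · subst hv
        simp [SimpleGraph.dist_self]
      · have hne : G.dist s v ≠ 0 := by
          intro h0'
          exact hv ((hconn.preconnected s v).dist_eq_zero_iff.mp h0').symm
        simp [hv, Nat.le_zero, hne]
    | succ k ih =>
      intro v
      have hiff : (∃ u ∈ insert v (G.neighborFinset v), G.dist s u ≤ k) ↔
          G.dist s v ≤ k + 1 := by
        constructor
        · rintro ⟨u, hu, hdu⟩
          rcases Finset.mem_insert.mp hu with rfl | hu
          · exact le_trans hdu (Nat.le_succ k)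
          · have hadj : G.Adj u v := G.adj_symm ((SimpleGraph.mem_neighborFinset _ _ _).mp hu)
            have htri : G.dist s v ≤ G.dist s u + G.dist u v :=
              hconn.dist_triangle
            have hd1 : G.dist u v ≤ 1 := by
              have := SimpleGraph.dist_le (SimpleGraph.Walk.cons hadj SimpleGraph.Walk.nil)
              simpa using this
            omega
        · intro hdv
          by_cases hk : G.dist s v ≤ k
          · exact ⟨v, Finset.mem_insert_self _ _, hk⟩
          · obtain ⟨p, hp⟩ := (hconn.preconnected s v).exists_walk_length_eq_dist
            have hlen : p.reverse.length = k + 1 := by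
              rw [SimpleGraph.Walk.length_reverse, hp]; omega
            obtain ⟨u, hadj, hdu⟩ := exists_pred_vertex G p.reverse hlen
            exact ⟨u, Finset.mem_insert_of_mem ((SimpleGraph.mem_neighborFinset _ _ _).mpr hadj), hdu⟩
      refine Prod.ext ?_ ?_
      · rw [hstep1]
        by_cases hc : G.dist s v ≤ k + 1
        · obtain ⟨u, huS, hdu⟩ := hiff.mpr hc
          simp only [hc, if_true]
          refine le_antisymm ?_ ?_
          · refine Finset.sup'_le _ _ (fun w _ => ?_)
            rw [ih w]
            split <;> norm_num
          · have := Finset.le_sup' (f := fun u => (h k u).1) huS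
            rw [ih u] at this
            simpa only [hdu, if_true] using this
        · have hall : ∀ w ∈ insert v (G.neighborFinset v), ¬ G.dist s w ≤ k := by
            intro w hw hwk
            exact hc (hiff.mp ⟨w, hw, hwk⟩)
          simp only [hc, if_false]
          refine le_antisymm ?_ ?_
          · refine Finset.sup'_le _ _ (fun w hw => ?_)
            rw [ih w]
            simp [hall w hw]
          · have := Finset.le_sup' (f := fun u => (h k u).1) (Finset.mem_insert_self v (G.neighborFinset v))
            rw [ih v] at this
            simpa only [hall v (Finset.mem_insert_self v _), if_false] using this
      · rw [hstep2]
        by_cases hc : G.dist s v ≤ k + 1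
        · obtain ⟨u, huS, hdu⟩ := hiff.mpr hc
          simp only [hc, if_true]
          refine le_antisymm ?_ ?_
          · refine Finset.sup'_le _ _ (fun w _ => ?_)
            rw [ih w]
            split <;> simp [hℓ0]
          · have := Finset.le_sup' (f := fun u => (h k u).1 * (h k u).2) huS
            rw [ih u] at this
            simpa only [hdu, if_true, one_mul] using this
        · have hall : ∀ w ∈ insert v (G.neighborFinset v), ¬ G.dist s w ≤ k := by
            intro w hw hwk
            exact hc (hiff.mp ⟨w, hw, hwk⟩)
          simp only [hc, if_false]
          refine le_antisymm ?_ ?_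
          · refine Finset.sup'_le _ _ (fun w hw => ?_)
            rw [ih w]
            simp [hall w hw]
          · have := Finset.le_sup' (f := fun u => (h k u).1 * (h k u).2)
              (Finset.mem_insert_self v (G.neighborFinset v))
            rw [ih v] at this
            simpa only [hall v (Finset.mem_insert_self v _), if_false, mul_zero] using this
  rw [key r t, if_pos (le_of_eq hdist)]
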